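/- For every real number n ≥ 5000, (1 + (n/log n)·(1 + 1/√(log n)))^{n − 3 − (n/log n)·(1 + 1/√(log n))} > (1 + (n/log n)·(1 + 1.1/√(log n)))^{n − 1 − (n/log n)·(1 + 1.1/√(log n))}. -/

import Mathlib

set_option maxHeartbeats 1000000


/-- For every real `n ≥ 5000`,
`(1 + (n/log n)(1 + 1/√(log n)))^{n − 3 − (n/log n)(1 + 1/√(log n))}
  > (1 + (n/log n)(1 + 1.1/√(log n)))^{n − 1 − (n/log n)(1 + 1.1/√(log n))}`. -/
theorem k_lower_bound_ineq (n : ℝ) (hn : 5000 ≤ n) :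
    (1 + n / Real.log n * (1 + 1.1 / Real.sqrt (Real.log n))) ^
        (n - 1 - n / Real.log n * (1 + 1.1 / Real.sqrt (Real.log n))) <
      (1 + n / Real.log n * (1 + 1 / Real.sqrt (Real.log n))) ^
        (n - 3 - n / Real.log n * (1 + 1 / Real.sqrt (Real.log n))) := by
  have hn0 : (0:ℝ) < n := by linarith
  obtain ⟨L, hLdef⟩ : ∃ x : ℝ, x = Real.log n := ⟨_, rfl⟩
  rw [← hLdef]
  obtain ⟨s, hsdef⟩ : ∃ x : ℝ, x = Real.sqrt L := ⟨_, rfl⟩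
  rw [← hsdef]
  obtain ⟨B, hBdef⟩ : ∃ x : ℝ, x = n / L * (1 + 1.1 / s) := ⟨_, rfl⟩
  rw [← hBdef]
  obtain ⟨A, hAdef⟩ : ∃ x : ℝ, x = n / L * (1 + 1 / s) := ⟨_, rfl⟩
  rw [← hAdef]
  -- numeric exp bounds
  have h17 : Real.exp 17 = (Real.exp 1)^(17:ℕ) := by
    rw [← Real.exp_nat_mul]; norm_num
  have he1 := Real.exp_one_gt_d9
  have he2 := Real.exp_one_lt_d9
  have hexp17_lb : (24000000:ℝ) ≤ Real.exp 17 := by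
    rw [h17]
    calc (24000000:ℝ) ≤ 2.7182818283^(17:ℕ) := by norm_num
      _ ≤ (Real.exp 1)^(17:ℕ) := by gcongr
  have hexp17_ub : Real.exp 17 ≤ 25000000 := by
    rw [h17]
    calc (Real.exp 1)^(17:ℕ) ≤ 2.7182818286^(17:ℕ) := by gcongr
      _ ≤ 25000000 := by norm_num
  have hexp85sq : Real.exp 8.5 * Real.exp 8.5 = Real.exp 17 := by
    rw [← Real.exp_add]; norm_num
  have hexp85_pos := Real.exp_pos (8.5:ℝ)
  have hexp85_ub : Real.exp 8.5 ≤ 5000 := by nlinarith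
  have hexp85_lb : (4898:ℝ) ≤ Real.exp 8.5 := by nlinarith
  -- L ≥ 8.5
  have hnexp : Real.exp L = n := by rw [hLdef]; exact Real.exp_log hn0
  have hL85 : (8.5:ℝ) ≤ L := by
    have h : Real.exp 8.5 ≤ Real.exp L := by rw [hnexp]; linarith
    exact Real.exp_le_exp.1 h
  have hL0 : (0:ℝ) < L := by linarith
  have hs0 : (0:ℝ) < s := by rw [hsdef]; exact Real.sqrt_pos.mpr hL0
  have hss : s * s = L := by rw [hsdef]; exact Real.mul_self_sqrt hL0.le
  have hs29 : (2.9:ℝ) ≤ s := by nlinarith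
  have hL2 : L = s^2 := by rw [← hss]; ring
  have hLs : L * s = s^3 := by rw [← hss]; ring
  have hL3 : L^3 = s^6 := by rw [hL2]; ring
  have hLs4 : L * s^4 = s^6 := by rw [hL2]; ring
  -- 7 L^3 ≤ n
  have he7 : 7 * L^3 ≤ n := by
    have hx0 : (0:ℝ) ≤ (L - 8.5)/3 := by linarith
    have h1 : 1 + (L-8.5)/3 ≤ Real.exp ((L-8.5)/3) := by
      have := Real.add_one_le_exp ((L-8.5)/3); linarith
    have harg : ((3:ℕ):ℝ) * ((L-8.5)/3) = L - 8.5 := by push_cast; ring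
    have hexpx : (1 + (L-8.5)/3)^(3:ℕ) ≤ Real.exp (L - 8.5) := by
      calc (1 + (L-8.5)/3)^(3:ℕ) ≤ (Real.exp ((L-8.5)/3))^(3:ℕ) :=
            pow_le_pow_left₀ (by linarith) h1 3
        _ = Real.exp (L - 8.5) := by rw [← Real.exp_nat_mul, harg]
    have hsplit : Real.exp 8.5 * Real.exp (L - 8.5) = Real.exp L := by
      rw [← Real.exp_add]; norm_num
    have h2 : 4898 * (1 + (L-8.5)/3)^(3:ℕ) ≤ n := by
      rw [← hnexp, ← hsplit]
      exact mul_le_mul hexp85_lb hexpx (pow_nonneg (by linarith) 3) hexp85_pos.le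
    have h85 : (0:ℝ) ≤ L - 8.5 := by linarith
    nlinarith [h2, h85, sq_nonneg (L - 8.5),
      mul_nonneg (mul_nonneg h85 h85) h85]
  clear h17 he2 hexp17_lb hexp17_ub hexp85sq hexp85_pos hexp85_ub hexp85_lb hnexp
  -- log L bounds
  obtain ⟨E, hEdef⟩ : ∃ x : ℝ, x = Real.log L := ⟨_, rfl⟩
  have hE0 : (0:ℝ) < E := by rw [hEdef]; exact Real.log_pos (by linarith)
  have hEub : E ≤ 0.736 * s := by
    have hlogs : Real.log s ≤ s / Real.exp 1 := by
      have h1 : Real.log (s / Real.exp 1) ≤ s / Real.exp 1 - 1 :=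
        Real.log_le_sub_one_of_pos (div_pos hs0 (Real.exp_pos 1))
      rw [Real.log_div (ne_of_gt hs0) (ne_of_gt (Real.exp_pos 1)), Real.log_exp] at h1
      linarith
    have h2 : E = 2 * Real.log s := by
      rw [hEdef, ← hss, Real.log_mul (ne_of_gt hs0) (ne_of_gt hs0)]; ring
    have h3 : s / Real.exp 1 ≤ s / 2.7182818283 :=
      div_le_div_of_nonneg_left hs0.le (by norm_num) he1.le
    have h4 : s / 2.7182818283 = s * (10000000000/27182818283) := by ring
    rw [h2]; rw [h4] at h3
    nlinarith [hlogs, h3, hs0]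
  -- positivity of A, B, D
  clear he1
  have h1s : (0:ℝ) < 1/s := by positivity
  have h11s : (0:ℝ) < 1.1/s := by positivity
  have hA0 : (0:ℝ) < A := by
    rw [hAdef]; exact mul_pos (div_pos hn0 hL0) (by linarith)
  have hB0 : (0:ℝ) < B := by
    rw [hBdef]; exact mul_pos (div_pos hn0 hL0) (by linarith)
  have h1A : (0:ℝ) < 1 + A := by linarith
  have h1B : (0:ℝ) < 1 + B := by linarith
  set D := B - A with hDBA
  have hD : D = n / (10 * L * s) := by
    rw [hDBA, hAdef, hBdef]
    field_simp
    ring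
  clear_value D
  have hD0 : (0:ℝ) < D := by
    rw [hD]; exact div_pos hn0 (by positivity)
  have hDlb : 0.7 * s^3 ≤ D := by
    rw [hD, le_div_iff₀ (by positivity : (0:ℝ) < 10 * L * s)]
    nlinarith [he7, hL3, hLs4]
  have h29 : (0:ℝ) ≤ s - 2.9 := by linarith
  have hcube : (24:ℝ) ≤ s^3 := by
    nlinarith [mul_nonneg (mul_nonneg h29 h29) h29, sq_nonneg (s - 2.9)]
  have hD2 : (2:ℝ) ≤ D := by nlinarith
  -- B is small compared to n
  have hBn : B ≤ 0.17 * n := by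
    rw [hBdef]
    have t1 : 1.1/s ≤ 1.1/2.9 := div_le_div_of_nonneg_left (by norm_num) (by norm_num) hs29
    have t2 : n/L ≤ n/8.5 := div_le_div_of_nonneg_left hn0.le (by norm_num) hL85
    have t3 : (0:ℝ) ≤ 1 + 1.1/s := by linarith
    calc n/L * (1 + 1.1/s) ≤ n/8.5 * (1 + 1.1/2.9) :=
          mul_le_mul t2 (by linarith) t3 (by positivity)
      _ = n * (80/493) := by ring
      _ ≤ 0.17 * n := by linarith
  have hnB1 : (0:ℝ) < n - 1 - B := by nlinarith
  have hnB : (0:ℝ) < n - B := by nlinarith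
  -- lower bound for log(1+A)
  have hs1 : (0:ℝ) < s + 1 := by linarith
  have hLA_lb : L - E + 1/(s+1) ≤ Real.log (1 + A) := by
    have h1 : Real.log A ≤ Real.log (1 + A) := by
      have h0 : (1:ℝ) ≤ (1+A)/A := by rw [le_div_iff₀ hA0]; linarith
      have := Real.log_nonneg h0
      rw [Real.log_div (ne_of_gt h1A) (ne_of_gt hA0)] at this
      linarith
    have h2 : Real.log A = Real.log n - Real.log L + Real.log (1 + 1/s) := by
      rw [hAdef, Real.log_mul (ne_of_gt (div_pos hn0 hL0)) (by linarith),
        Real.log_div (ne_of_gt hn0) (ne_of_gt hL0)]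
    have h4 : Real.log (s/(s+1)) ≤ s/(s+1) - 1 :=
      Real.log_le_sub_one_of_pos (div_pos hs0 hs1)
    have h5 : (1 + 1/s) = (s/(s+1))⁻¹ := by
      rw [inv_div]; field_simp
    have h6 : s/(s+1) - 1 + 1/(s+1) = 0 := by field_simp; ring
    have h3 : 1/(s+1) ≤ Real.log (1 + 1/s) := by
      rw [h5, Real.log_inv]; linarith
    rw [← hLdef, ← hEdef] at h2
    linarith
  -- log quotient bound
  have hK1 : Real.log (1 + B) - Real.log (1 + A) ≤ D / (1 + A) := by
    have h1 : Real.log ((1+B)/(1+A)) ≤ (1+B)/(1+A) - 1 :=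
      Real.log_le_sub_one_of_pos (div_pos h1B h1A)
    rw [Real.log_div (ne_of_gt h1B) (ne_of_gt h1A)] at h1
    have h2 : (1+B)/(1+A) - 1 = D/(1+A) := by
      rw [hDBA]; field_simp; ring
    linarith [h2 ▸ h1]
  -- main chain
  have hmain : (n - 1 - B) * (D / (1 + A)) < (D - 2) * Real.log (1 + A) := by
    have step1 : (n - 1 - B) * (D / (1 + A)) < (n - B) * D / A := by
      rw [← mul_div_assoc, div_lt_div_iff₀ h1A hA0]
      linarith [mul_pos hD0 hnB, mul_pos hD0 hA0]
    have step2 : (n - B) * D / A = D * (L * s - s - 1.1) / (s + 1) := by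
      rw [hAdef, hBdef]
      field_simp
      ring
    have step3 : D * (L * s - s - 1.1) / (s + 1) ≤ (D - 2) * (L - E + 1/(s+1)) := by
      rw [div_le_iff₀ hs1]
      have hLam : (D - 2) * (L - E + 1/(s+1)) * (s+1) = (D-2) * ((L-E)*(s+1) + 1) := by
        field_simp
      rw [hLam]
      have h4D : 0 ≤ D * ((L + s + 2.1 - (s+1)*E) - 4) := by
        apply mul_nonneg hD0.le
        nlinarith [mul_le_mul_of_nonneg_left hEub (le_of_lt hs1), hL2, hs29]
      have hEs : 0 ≤ E * (s + 1) := mul_nonneg hE0.le hs1.le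
      have hs3 : 2*s^2 + 2 ≤ 0.8 * s^3 := by
        nlinarith [mul_nonneg (mul_nonneg hs0.le hs0.le) h29]
      linarith [h4D, hDlb, hs3, hLs, hL2, hEs]
    have step4 : (D - 2) * (L - E + 1/(s+1)) ≤ (D - 2) * Real.log (1 + A) :=
      mul_le_mul_of_nonneg_left hLA_lb (by linarith)
    calc (n - 1 - B) * (D / (1 + A)) < (n - B) * D / A := step1
      _ = D * (L * s - s - 1.1) / (s + 1) := step2
      _ ≤ (D - 2) * (L - E + 1/(s+1)) := step3
      _ ≤ (D - 2) * Real.log (1 + A) := step4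
  -- from log inequality to rpow
  rw [Real.rpow_def_of_pos h1B, Real.rpow_def_of_pos h1A]
  apply Real.exp_lt_exp.2
  have hK1' : (n - 1 - B) * (Real.log (1 + B) - Real.log (1 + A)) ≤ (n - 1 - B) * (D / (1 + A)) :=
    mul_le_mul_of_nonneg_left hK1 hnB1.le
  rw [hDBA] at hmain hK1'
  linarith [hK1', hmain]
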